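/- arXiv:2104.05209 — 2 statements merged into one kernel-verified Lean document; each statement's English description precedes it below -/
import Mathlib

section
/- Let k ≥ 0 and let a, b be real numbers (or integers). The (k+1)×(k+1) matrix A_k(a,b) with (i,j) entry (a−i+1)^{k−j+1} (b+i−1)^{j−1} for 1 ≤ i,j ≤ k+1 (convention 0^0 = 1) has determinant (a+b)^{k(k+1)/2} · Π_{h=1}^{k} h!. -/
open Polynomial Finset Matrix

lemma aux_det_homog {K : Type*} [Field K] {n : ℕ} (u v : Fin n → K) (hu : ∀ i, u i ≠ 0) :
    (Matrix.of fun i j : Fin n => u i ^ (n - 1 - (j : ℕ)) * v i ^ (j : ℕ)).det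
      = ∏ i : Fin n, ∏ j ∈ Finset.Ioi i, (v j * u i - v i * u j) := by
  have h1 : (Matrix.of fun i j : Fin n => u i ^ (n - 1 - (j : ℕ)) * v i ^ (j : ℕ))
      = Matrix.of fun i j : Fin n =>
          u i ^ (n - 1) * (Matrix.vandermonde fun i => v i / u i) i j := by
    ext i j
    simp only [Matrix.of_apply, Matrix.vandermonde_apply]
    rw [div_pow, pow_sub₀ _ (hu i) (by omega : (j : ℕ) ≤ n - 1)]
    field_simp
  rw [h1, Matrix.det_mul_column, Matrix.det_vandermonde]
  have h2 : (∏ i : Fin n, ∏ j ∈ Finset.Ioi i, (v j * u i - v i * u j))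
      = ∏ i : Fin n, ∏ j ∈ Finset.Ioi i, ((u i * u j) * (v j / u j - v i / u i)) := by
    refine Finset.prod_congr rfl fun i _ => Finset.prod_congr rfl fun j _ => ?_
    field_simp [hu i, hu j]
  have h3 : (∏ i : Fin n, ∏ j ∈ Finset.Ioi i, (u i * u j)) = ∏ i : Fin n, u i ^ (n - 1) := by
    have hswap : (∏ i : Fin n, ∏ j ∈ Finset.Ioi i, u j)
        = ∏ j : Fin n, ∏ i ∈ Finset.Iio j, u j :=
      Finset.prod_comm' (by simp)
    calc (∏ i : Fin n, ∏ j ∈ Finset.Ioi i, (u i * u j))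
        = (∏ i : Fin n, u i ^ (Finset.Ioi i).card) * ∏ i : Fin n, ∏ j ∈ Finset.Ioi i, u j := by
          rw [← Finset.prod_mul_distrib]
          exact Finset.prod_congr rfl fun i _ => by
            rw [Finset.prod_mul_distrib, Finset.prod_const]
      _ = (∏ i : Fin n, u i ^ (n - 1 - (i : ℕ))) * ∏ j : Fin n, u j ^ (j : ℕ) := by
          rw [hswap]
          simp [Fin.card_Ioi, Fin.card_Iio, Finset.prod_const]
      _ = ∏ i : Fin n, u i ^ (n - 1) := by
          rw [← Finset.prod_mul_distrib]
          refine Finset.prod_congr rfl fun i _ => ?_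
          rw [← pow_add]
          congr 1
          have := i.isLt
          omega
  rw [h2, ← h3]
  simp_rw [← Finset.prod_mul_distrib]

lemma prod_Ioc_sub (k i : ℕ) : ∏ j ∈ Finset.Ioc i k, (j - i) = (k - i).factorial := by
  induction k with
  | zero => rw [Finset.Ioc_eq_empty (by omega)]; simp
  | succ k ih =>
    rcases le_or_gt i k with h | h
    · rw [Finset.prod_Ioc_succ_top (by omega), ih,
        show k + 1 - i = (k - i) + 1 by omega, Nat.factorial_succ]
      ring
    · rw [Finset.Ioc_eq_empty (by omega), show k + 1 - i = 0 by omega]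
      simp

lemma prod_range_factorial (k : ℕ) :
    ∏ m ∈ Finset.range (k + 1), m.factorial = ∏ h ∈ Finset.Icc 1 k, h.factorial := by
  induction k with
  | zero => simp
  | succ k ih =>
    rw [Finset.prod_range_succ, ih, ← Finset.prod_Icc_succ_top (by omega)]

lemma superfact (k : ℕ) :
    ∏ i : Fin (k + 1), ∏ j ∈ Finset.Ioi i, ((j : ℕ) - (i : ℕ))
      = ∏ h ∈ Finset.Icc 1 k, h.factorial := by
  have inner : ∀ i : Fin (k + 1),
      ∏ j ∈ Finset.Ioi i, ((j : ℕ) - (i : ℕ)) = (k - (i : ℕ)).factorial := by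
    intro i
    have h := Finset.prod_map (Finset.Ioi i) Fin.valEmbedding (fun m => m - (i : ℕ))
    rw [Fin.map_valEmbedding_Ioi] at h
    simp only [Nat.add_sub_cancel, Fin.valEmbedding_apply] at h
    rw [← h, Finset.Ioo_add_one_right_eq_Ioc, prod_Ioc_sub]
  calc ∏ i : Fin (k + 1), ∏ j ∈ Finset.Ioi i, ((j : ℕ) - (i : ℕ))
      = ∏ i : Fin (k + 1), (k - (i : ℕ)).factorial := Finset.prod_congr rfl fun i _ => inner i
    _ = ∏ i ∈ Finset.range (k + 1), (k - i).factorial :=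
        Fin.prod_univ_eq_prod_range (fun i => (k - i).factorial) (k + 1)
    _ = ∏ i ∈ Finset.range (k + 1), i.factorial := by
        have := Finset.prod_range_reflect (fun m => m.factorial) (k + 1)
        simpa using this
    _ = ∏ h ∈ Finset.Icc 1 k, h.factorial := prod_range_factorial k

lemma sum_card_Ioi (k : ℕ) :
    ∑ i : Fin (k + 1), (Finset.Ioi i).card = k * (k + 1) / 2 := by
  simp_rw [Fin.card_Ioi]
  rw [Fin.sum_univ_eq_sum_range (fun i => k + 1 - 1 - i) (k + 1),
    Finset.sum_range_reflect (fun i => i) (k + 1), Finset.sum_range_id,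
    Nat.add_sub_cancel, Nat.mul_comm]

theorem stmt16 (k : ℕ) (a b : ℝ) :
    (Matrix.of fun i j : Fin (k + 1) =>
        (a - (i : ℕ)) ^ (k - (j : ℕ)) * (b + (i : ℕ)) ^ (j : ℕ)).det
    = (a + b) ^ (k * (k + 1) / 2) * ∏ h ∈ Finset.Icc 1 k, (h.factorial : ℝ) := by
  classical
  set P : Matrix (Fin (k + 1)) (Fin (k + 1)) ℝ[X] :=
    Matrix.of fun i j : Fin (k + 1) =>
      (X - C ((i : ℕ) : ℝ)) ^ (k - (j : ℕ)) * (C b + C ((i : ℕ) : ℝ)) ^ (j : ℕ) with hPdef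
  have hP : P.det
      = C (∏ h ∈ Finset.Icc 1 k, (h.factorial : ℝ)) * (X + C b) ^ (k * (k + 1) / 2) := by
    apply IsFractionRing.injective ℝ[X] (RatFunc ℝ)
    set f := algebraMap ℝ[X] (RatFunc ℝ) with hf
    rw [RingHom.map_det, RingHom.mapMatrix_apply]
    set u : Fin (k + 1) → RatFunc ℝ := fun i => f (X - C ((i : ℕ) : ℝ)) with hu
    set v : Fin (k + 1) → RatFunc ℝ := fun i => f (C b + C ((i : ℕ) : ℝ)) with hv
    have hune : ∀ i, u i ≠ 0 := fun i =>
      (map_ne_zero_iff f (IsFractionRing.injective ℝ[X] (RatFunc ℝ))).mpr (X_sub_C_ne_zero _)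
    have hmap : P.map f = Matrix.of fun i j : Fin (k + 1) =>
        u i ^ (k + 1 - 1 - (j : ℕ)) * v i ^ (j : ℕ) := by
      ext i j
      simp [hPdef, hu, hv]
    rw [hmap, aux_det_homog u v hune]
    have hfac : ∀ i : Fin (k + 1), ∀ j ∈ Finset.Ioi i,
        v j * u i - v i * u j = f (C (((j : ℕ) - (i : ℕ) : ℕ) : ℝ) * (X + C b)) := by
      intro i j hij
      rw [Finset.mem_Ioi] at hij
      have hle : (i : ℕ) ≤ (j : ℕ) := le_of_lt hij
      have hc : (((j : ℕ) - (i : ℕ) : ℕ) : ℝ) = ((j : ℕ) : ℝ) - ((i : ℕ) : ℝ) := by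
        push_cast [hle]; ring
      simp only [hu, hv]
      rw [← _root_.map_mul, ← _root_.map_mul, ← map_sub, hc]
      congr 1
      rw [C_sub]
      ring
    rw [Finset.prod_congr rfl fun i _ => Finset.prod_congr rfl (hfac i)]
    have hpoly : (∏ i : Fin (k + 1), ∏ j ∈ Finset.Ioi i,
          (C (((j : ℕ) - (i : ℕ) : ℕ) : ℝ) * (X + C b)))
        = C (∏ h ∈ Finset.Icc 1 k, (h.factorial : ℝ)) * (X + C b) ^ (k * (k + 1) / 2) := by
      simp_rw [Finset.prod_mul_distrib, Finset.prod_const]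
      rw [Finset.prod_pow_eq_pow_sum, sum_card_Ioi]
      congr 1
      have : (∏ i : Fin (k + 1), ∏ j ∈ Finset.Ioi i, C ((((j : ℕ) - (i : ℕ) : ℕ)) : ℝ))
          = C (((∏ i : Fin (k + 1), ∏ j ∈ Finset.Ioi i, ((j : ℕ) - (i : ℕ)) : ℕ)) : ℝ) := by
        push_cast
        rw [map_prod]
        exact Finset.prod_congr rfl fun i _ => (map_prod _ _ _).symm
      rw [this, superfact]
      congr 1
      push_cast
      rfl
    calc (∏ i : Fin (k + 1), ∏ j ∈ Finset.Ioi i,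
            f (C (((j : ℕ) - (i : ℕ) : ℕ) : ℝ) * (X + C b)))
        = f (∏ i : Fin (k + 1), ∏ j ∈ Finset.Ioi i,
            (C (((j : ℕ) - (i : ℕ) : ℕ) : ℝ) * (X + C b))) := by
          rw [map_prod]
          exact Finset.prod_congr rfl fun i _ => (map_prod _ _ _).symm
      _ = f (C (∏ h ∈ Finset.Icc 1 k, (h.factorial : ℝ)) * (X + C b) ^ (k * (k + 1) / 2)) := by
          rw [hpoly]
  have hEval := RingHom.map_det (Polynomial.evalRingHom a) P
  rw [RingHom.mapMatrix_apply] at hEval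
  have hM : (Matrix.of fun i j : Fin (k + 1) =>
        (a - (i : ℕ)) ^ (k - (j : ℕ)) * (b + (i : ℕ)) ^ (j : ℕ))
      = P.map (Polynomial.evalRingHom a) := by
    ext i j
    simp [hPdef]
  rw [hM, ← hEval, hP]
  simp only [Polynomial.coe_evalRingHom, eval_mul, eval_pow, eval_add, eval_C, eval_X]
  ring
end

section
/- For every positive integer d, the determinant of the power-product matrix V(2,d) equals d^{d(d+1)/2} · Π_{h=1}^{d} h!. -/
open Finset Matrix

lemma prod_pairs {n : ℕ} (b : Fin (n+1) → ℝ) :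
    ∏ i, ∏ j ∈ Ioi i, (b i * b j) = ∏ i, b i ^ n := by
  have h1 : ∏ i, ∏ j ∈ Ioi i, (b i * b j)
      = (∏ i, ∏ j ∈ Ioi i, b i) * (∏ i, ∏ j ∈ Ioi i, b j) := by
    rw [← Finset.prod_mul_distrib]
    exact Finset.prod_congr rfl fun i _ => (Finset.prod_mul_distrib)
  rw [h1]
  have h2 : (∏ i, ∏ j ∈ Ioi i, b j) = ∏ j : Fin (n+1), ∏ _i ∈ Iio j, b j := by
    apply Finset.prod_comm' (t' := Finset.univ)
    intro x y
    simp [Finset.mem_Ioi, Finset.mem_Iio]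
  rw [h2]
  simp only [Finset.prod_const, Fin.card_Ioi, Fin.card_Iio]
  rw [← Finset.prod_mul_distrib]
  apply Finset.prod_congr rfl
  intro i _
  rw [← pow_add]
  congr 1
  omega

lemma key (d : ℕ) (t : ℝ) (ht : 0 < t) :
    (Matrix.of fun i j : Fin (d + 1) =>
        ((i : ℕ) : ℝ) ^ (j : ℕ) * ((d : ℝ) - (i : ℕ) + t) ^ (d - (j : ℕ))).det
    = ((d : ℝ) + t) ^ (d * (d + 1) / 2) * ∏ h ∈ Finset.Icc 1 d, (h.factorial : ℝ) := by
  set b : Fin (d+1) → ℝ := fun i => (d : ℝ) - (i : ℕ) + t with hb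
  have hbpos : ∀ i, 0 < b i := by
    intro i
    have : ((i : ℕ) : ℝ) ≤ d := by exact_mod_cast Fin.is_le i
    simp only [hb]; linarith
  have hbne : ∀ i, b i ≠ 0 := fun i => (hbpos i).ne'
  have hM : (Matrix.of fun i j : Fin (d + 1) =>
        ((i : ℕ) : ℝ) ^ (j : ℕ) * b i ^ (d - (j : ℕ)))
      = Matrix.of fun i j : Fin (d + 1) =>
        b i ^ d * (Matrix.vandermonde (fun i : Fin (d+1) => ((i : ℕ) : ℝ) / b i)) i j := by
    ext i j
    simp only [Matrix.of_apply, Matrix.vandermonde_apply]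
    rw [div_pow, pow_sub₀ _ (hbne i) (Fin.is_le j)]
    field_simp
  rw [hM, Matrix.det_mul_column, Matrix.det_vandermonde]
  have hpp := prod_pairs b
  rw [← hpp, ← Finset.prod_mul_distrib]
  have hstep : ∀ i : Fin (d+1),
      (∏ j ∈ Ioi i, (b i * b j)) * ∏ j ∈ Ioi i, (((j : ℕ) : ℝ) / b j - ((i : ℕ) : ℝ) / b i)
      = ∏ j ∈ Ioi i, (((d : ℝ) + t) * (((j : ℕ) : ℝ) - ((i : ℕ) : ℝ))) := by
    intro i
    rw [← Finset.prod_mul_distrib]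
    apply Finset.prod_congr rfl
    intro j hj
    have hij : (i : ℕ) < (j : ℕ) := by simpa [Finset.mem_Ioi] using hj
    rw [mul_sub]
    rw [show b i * b j * (((j : ℕ) : ℝ) / b j) = ((j : ℕ) : ℝ) * b i by
      rw [mul_assoc, mul_comm (b j), div_mul_cancel₀ _ (hbne j), mul_comm]]
    rw [show b i * b j * (((i : ℕ) : ℝ) / b i) = ((i : ℕ) : ℝ) * b j by
      rw [mul_comm (b i) (b j), mul_assoc, mul_comm (b i), div_mul_cancel₀ _ (hbne i), mul_comm]]
    simp only [hb]
    ring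
  rw [Finset.prod_congr rfl (fun i _ => hstep i)]
  have hsplit : ∏ i : Fin (d+1), ∏ j ∈ Ioi i, (((d : ℝ) + t) * (((j : ℕ) : ℝ) - ((i : ℕ) : ℝ)))
      = (∏ i : Fin (d+1), ∏ j ∈ Ioi i, ((d : ℝ) + t)) *
        ∏ i : Fin (d+1), ∏ j ∈ Ioi i, (((j : ℕ) : ℝ) - ((i : ℕ) : ℝ)) := by
    rw [← Finset.prod_mul_distrib]
    exact Finset.prod_congr rfl fun i _ => Finset.prod_mul_distrib
  rw [hsplit]
  congr 1
  · simp only [Finset.prod_const, Fin.card_Ioi]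
    rw [Finset.prod_pow_eq_pow_sum]
    congr 1
    rw [Fin.sum_univ_eq_sum_range (fun i => d + 1 - 1 - i)]
    rw [Finset.sum_range_reflect (fun i => i) (d+1)]
    rw [Finset.sum_range_id, Nat.add_sub_cancel, Nat.mul_comm]
  · have := Matrix.det_vandermonde_id_eq_superFactorial (R := ℝ) d
    rw [Matrix.det_vandermonde] at this
    rw [this]
    rw [← Nat.prod_Icc_factorial]
    push_cast
    rfl

theorem stmt17 (d : ℕ) (hd : 0 < d) :
    (Matrix.of fun i j : Fin (d + 1) =>
        ((i : ℕ) : ℝ) ^ (j : ℕ) * ((d - (i : ℕ) : ℕ) : ℝ) ^ (d - (j : ℕ))).det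
    = (d : ℝ) ^ (d * (d + 1) / 2) * ∏ h ∈ Finset.Icc 1 d, (h.factorial : ℝ) := by
  set f : ℝ → ℝ := fun t => (Matrix.of fun i j : Fin (d + 1) =>
        ((i : ℕ) : ℝ) ^ (j : ℕ) * ((d : ℝ) - (i : ℕ) + t) ^ (d - (j : ℕ))).det with hf
  set g : ℝ → ℝ := fun t =>
      ((d : ℝ) + t) ^ (d * (d + 1) / 2) * ∏ h ∈ Finset.Icc 1 d, (h.factorial : ℝ) with hg
  have hfc : Continuous f := by
    apply Continuous.matrix_det
    apply continuous_matrix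
    intro i j
    exact continuous_const.mul ((continuous_const.add continuous_id).pow _)
  have hgc : Continuous g :=
    ((continuous_const.add continuous_id).pow _).mul continuous_const
  have h1 : Filter.Tendsto f (nhdsWithin 0 (Set.Ioi 0)) (nhds (f 0)) :=
    (hfc.tendsto 0).mono_left nhdsWithin_le_nhds
  have h2 : Filter.Tendsto f (nhdsWithin 0 (Set.Ioi 0)) (nhds (g 0)) := by
    refine Filter.Tendsto.congr' ?_ ((hgc.tendsto 0).mono_left nhdsWithin_le_nhds)
    filter_upwards [self_mem_nhdsWithin] with t ht
    exact (key d t ht).symm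
  have h0 : f 0 = g 0 := tendsto_nhds_unique h1 h2
  have hL : (Matrix.of fun i j : Fin (d + 1) =>
        ((i : ℕ) : ℝ) ^ (j : ℕ) * ((d - (i : ℕ) : ℕ) : ℝ) ^ (d - (j : ℕ))).det = f 0 := by
    simp only [hf]
    congr 1
    ext i j
    simp only [Matrix.of_apply]
    rw [Nat.cast_sub (Fin.is_le i)]
    ring
  rw [hL, h0, hg]
  simp
end
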